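/- Let X be a Joyal–Kock graph, and let f, g : I → X be two etale morphisms from the unit graph I mapping to two distinct edges of X, with f hitting a port of X in its s-complement and g hitting another port. Then the coequaliser of f and g exists in the category of graphs and etale morphisms, is computed levelwise, and the quotient map X → Y is etale and bijective on vertices. -/
import Mathlib


/-- A Joyal–Kock graph: a diagram of finite sets `A ←s– H –p→ V` with `s`
injective and a fixpoint-free involution `i` on the set of arcs `A`. -/
structure JKGraph where
  A : Type
  H : Type
  V : Type
  fintA : Fintype A
  fintH : Fintype H
  fintV : Fintype V
  decA : DecidableEq A
  decH : DecidableEq H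
  s : H → A
  p : H → V
  i : A → A
  s_inj : Function.Injective s
  i_invol : ∀ a, i (i a) = a
  i_nofix : ∀ a, i a ≠ a

attribute [instance] JKGraph.fintA JKGraph.fintH JKGraph.fintV JKGraph.decA JKGraph.decH

/-- An etale morphism of JK graphs: a levelwise map commuting with `s`, `p`
and the involutions, such that the square on `H` and `V` is a pullback (each
vertex maps to a vertex of the same valence). -/
structure Etale (G G' : JKGraph) where
  fA : G.A → G'.A
  fH : G.H → G'.H
  fV : G.V → G'.V
  comm_s : ∀ h, fA (G.s h) = G'.s (fH h)
  comm_p : ∀ h, fV (G.p h) = G'.p (fH h)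
  comm_i : ∀ a, fA (G.i a) = G'.i (fA a)
  pullback : ∀ (h' : G'.H) (v : G.V), G'.p h' = fV v → ∃! h : G.H, G.p h = v ∧ fH h = h'

/-- `IsEComp e1 e2 e` expresses that `e` is the (levelwise) composite of the
etale morphisms `e1` followed by `e2`. -/
def IsEComp {G G' G'' : JKGraph} (e1 : Etale G G') (e2 : Etale G' G'') (e : Etale G G'') : Prop :=
  (∀ a, e.fA a = e2.fA (e1.fA a)) ∧ (∀ h, e.fH h = e2.fH (e1.fH h)) ∧
  (∀ v, e.fV v = e2.fV (e1.fV v))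

/-- The ports of a graph: the arcs not in the image of `s`. -/
def JKGraph.ports (G : JKGraph) : Set G.A := {a | a ∉ Set.range G.s}

/-- An edge (i-orbit) is isolated if neither of its arcs lies in the image of
`s`; `NoIsolated` says the graph has no isolated edges. -/
def NoIsolated (G : JKGraph) : Prop :=
  ∀ a : G.A, a ∈ Set.range G.s ∨ G.i a ∈ Set.range G.s

/-- A reduced cover: an etale morphism which is surjective on arcs (hence on
edges) and bijective on vertices. -/
def IsReducedCover {R X : JKGraph} (e : Etale R X) : Prop :=
  Function.Bijective e.fV ∧ Function.Surjective e.fA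

/-- The unit graph `I`: one edge (two arcs exchanged by the involution) and no
vertices. -/
def unitGraph : JKGraph where
  A := Bool
  H := Empty
  V := Empty
  fintA := inferInstance
  fintH := inferInstance
  fintV := inferInstance
  decA := inferInstance
  decH := inferInstance
  s := Empty.elim
  p := Empty.elim
  i := not
  s_inj := fun x => x.elim
  i_invol := by decide
  i_nofix := by decide

/-- Let `f, g : I → X` be etale morphisms from the unit
graph mapping to two distinct edges of `X`, with `f` sending one arc to a port
and `g` sending the other arc to a port.  Then the coequaliser of `f` and `g`
exists in the category of graphs and etale morphisms and is computed
levelwise (bijective on half-edges and vertices, and on arcs the set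
coequaliser, gluing the two ports into an inner edge); the quotient map
`X → Y` is etale and bijective on vertices. -/
theorem Etale.ext' {G G' : JKGraph} {e e' : Etale G G'} (hA : e.fA = e'.fA)
    (hH : e.fH = e'.fH) (hV : e.fV = e'.fV) : e = e' := by
  cases e; cases e'; cases hA; cases hH; cases hV; rfl

section Aux
variable (X : JKGraph) (a1 b1 : X.A)

/-- the retraction collapsing `b1 ↦ a1`, `i b1 ↦ i a1`. -/
def rmap (a : X.A) : X.A := if a = b1 then a1 else if a = X.i b1 then X.i a1 else a

variable (hpa : a1 ∉ Set.range X.s) (hpb : X.i b1 ∉ Set.range X.s)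
  (h1 : a1 ≠ b1) (h2 : a1 ≠ X.i b1)

include h1 h2 in
theorem ia_ne_b : X.i a1 ≠ b1 ∧ X.i a1 ≠ X.i b1 := by
  constructor
  · intro h; apply h2; rw [← h, X.i_invol]
  · intro h; apply h1
    have := congrArg X.i h; rwa [X.i_invol, X.i_invol] at this

include h1 h2 in
theorem rmap_ne (a : X.A) : rmap X a1 b1 a ≠ b1 ∧ rmap X a1 b1 a ≠ X.i b1 := by
  obtain ⟨h3, h4⟩ := ia_ne_b X a1 b1 h1 h2
  unfold rmap; split_ifs with hb hbi
  · exact ⟨h1, h2⟩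
  · exact ⟨h3, h4⟩
  · exact ⟨hb, hbi⟩

include h1 h2 in
theorem rmap_i (a : X.A) : rmap X a1 b1 (X.i a) = X.i (rmap X a1 b1 a) := by
  obtain ⟨h3, h4⟩ := ia_ne_b X a1 b1 h1 h2
  unfold rmap
  by_cases hb : a = b1
  · rw [hb, if_neg (fun h => X.i_nofix b1 h), if_pos rfl, if_pos rfl]
  by_cases hbi : a = X.i b1
  · rw [hbi, X.i_invol, if_pos rfl, if_neg (X.i_nofix b1), if_pos rfl, X.i_invol]
  · rw [if_neg hb, if_neg hbi, if_neg, if_neg]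
    · intro h; apply hb; have := congrArg X.i h; rwa [X.i_invol, X.i_invol] at this
    · intro h; apply hbi; rw [← h, X.i_invol]

theorem rmap_id {a : X.A} (hb : a ≠ b1) (hbi : a ≠ X.i b1) : rmap X a1 b1 a = a := by
  unfold rmap; rw [if_neg hb, if_neg hbi]

include h1 h2 in
theorem rmap_eq_iff (a a' : X.A) : rmap X a1 b1 a = rmap X a1 b1 a' ↔
    (a = a' ∨ (a = a1 ∧ a' = b1) ∨ (a = b1 ∧ a' = a1) ∨
     (a = X.i a1 ∧ a' = X.i b1) ∨ (a = X.i b1 ∧ a' = X.i a1)) := by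
  obtain ⟨h3, h4⟩ := ia_ne_b X a1 b1 h1 h2
  have hab : a1 ≠ X.i a1 := fun h => X.i_nofix a1 h.symm
  have hbb : b1 ≠ X.i b1 := fun h => X.i_nofix b1 h.symm
  unfold rmap
  split_ifs with p1 p2 p3 p4 p5 p6 <;>
    simp_all <;>
    first
      | tauto
      | (constructor
         · rintro rfl <;> tauto
         · rintro (rfl | h) <;> tauto)

end Aux

section Glue
variable (X : JKGraph) (a1 b1 : X.A)
  (hpa : a1 ∉ Set.range X.s) (hpb : X.i b1 ∉ Set.range X.s)
  (h1 : a1 ≠ b1) (h2 : a1 ≠ X.i b1)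

/-- The glued graph: arcs are those of `X` except `b1` and `i b1`. -/
def glueY : JKGraph where
  A := {a : X.A // a ≠ b1 ∧ a ≠ X.i b1}
  H := X.H
  V := X.V
  fintA := Subtype.fintype _
  fintH := inferInstance
  fintV := inferInstance
  decA := Subtype.instDecidableEq
  decH := inferInstance
  s := fun h => ⟨rmap X a1 b1 (X.s h), rmap_ne X a1 b1 h1 h2 _⟩
  p := X.p
  i := fun a => ⟨X.i a.1, by
    obtain ⟨a, ha1, ha2⟩ := a
    refine ⟨fun h => ha2 ?_, fun h => ha1 ?_⟩
    · rw [← h, X.i_invol]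
    · have := congrArg X.i h; rwa [X.i_invol, X.i_invol] at this⟩
  s_inj := by
    intro h h' hs
    have hs' : rmap X a1 b1 (X.s h) = rmap X a1 b1 (X.s h') := congrArg Subtype.val hs
    rw [rmap_eq_iff X a1 b1 h1 h2] at hs'
    have hna : ∀ k : X.H, X.s k ≠ a1 := fun k hk => hpa ⟨k, hk⟩
    have hnb : ∀ k : X.H, X.s k ≠ X.i b1 := fun k hk => hpb ⟨k, hk⟩
    rcases hs' with h | ⟨ha, _⟩ | ⟨_, ha⟩ | ⟨_, ha⟩ | ⟨ha, _⟩
    · exact X.s_inj h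
    · exact absurd ha (hna h)
    · exact absurd ha (hna h')
    · exact absurd ha (hnb h')
    · exact absurd ha (hnb h)
  i_invol := fun a => Subtype.ext (X.i_invol a.1)
  i_nofix := fun a h => X.i_nofix a.1 (congrArg Subtype.val h)

/-- The quotient morphism `X → Y`. -/
def glueQ : Etale X (glueY X a1 b1 hpa hpb h1 h2) where
  fA := fun a => ⟨rmap X a1 b1 a, rmap_ne X a1 b1 h1 h2 a⟩
  fH := id
  fV := id
  comm_s := fun h => rfl
  comm_p := fun h => rfl
  comm_i := fun a => Subtype.ext (rmap_i X a1 b1 h1 h2 a)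
  pullback := fun h' v hv => ⟨h', ⟨hv, rfl⟩, fun y hy => hy.2⟩

end Glue

theorem jk_coequaliser_glues_ports (X : JKGraph) (f g : Etale unitGraph X)
    (hf : f.fA true ∉ Set.range X.s) (hg : g.fA false ∉ Set.range X.s)
    (hdist : f.fA true ≠ g.fA true ∧ f.fA true ≠ g.fA false) :
    ∃ (Y : JKGraph) (q : Etale X Y),
      Function.Bijective q.fH ∧ Function.Bijective q.fV ∧
      Function.Surjective q.fA ∧
      (∀ a a' : X.A, q.fA a = q.fA a' ↔
        (a = a' ∨ (a = f.fA true ∧ a' = g.fA true) ∨ (a = g.fA true ∧ a' = f.fA true) ∨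
         (a = f.fA false ∧ a' = g.fA false) ∨ (a = g.fA false ∧ a' = f.fA false))) ∧
      (∃ c0 : Etale unitGraph Y, IsEComp f q c0 ∧ IsEComp g q c0) ∧
      (∀ (K : JKGraph) (e : Etale X K),
        (∃ e0 : Etale unitGraph K, IsEComp f e e0 ∧ IsEComp g e e0) →
        ∃! e' : Etale Y K, IsEComp q e' e) := by
  -- notation
  set a1 := f.fA true with ha1
  set b1 := g.fA true with hb1
  have hfi : f.fA false = X.i a1 := f.comm_i true
  have hgi : g.fA false = X.i b1 := g.comm_i true
  have hpb : X.i b1 ∉ Set.range X.s := hgi ▸ hg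
  have h1 : a1 ≠ b1 := hdist.1
  have h2 : a1 ≠ X.i b1 := hgi ▸ hdist.2
  refine ⟨glueY X a1 b1 hf hpb h1 h2, glueQ X a1 b1 hf hpb h1 h2,
    Function.bijective_id, Function.bijective_id, ?_, ?_, ?_, ?_⟩
  · -- surjectivity on arcs
    rintro ⟨a, hb, hbi⟩
    exact ⟨a, Subtype.ext (rmap_id X a1 b1 hb hbi)⟩
  · -- fibre description
    intro a a'
    have key : (glueQ X a1 b1 hf hpb h1 h2).fA a = (glueQ X a1 b1 hf hpb h1 h2).fA a' ↔
        rmap X a1 b1 a = rmap X a1 b1 a' := by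
      unfold glueQ
      dsimp only
      exact ⟨fun h => congrArg Subtype.val h, fun h => Subtype.ext h⟩
    rw [key, rmap_eq_iff X a1 b1 h1 h2, ← hfi, ← hgi]
  · -- cocone
    refine ⟨⟨fun x => (glueQ X a1 b1 hf hpb h1 h2).fA (f.fA x), Empty.elim, Empty.elim,
      fun h => h.elim, fun h => h.elim, ?_, fun h' v _ => v.elim⟩, ?_, ?_⟩
    · intro a
      exact ((glueQ X a1 b1 hf hpb h1 h2).comm_i (f.fA a)).symm ▸
        congrArg (glueQ X a1 b1 hf hpb h1 h2).fA (f.comm_i a) ▸ rfl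
    · exact ⟨fun a => rfl, fun h => h.elim, fun v => v.elim⟩
    · refine ⟨fun a => ?_, fun h => h.elim, fun v => v.elim⟩
      cases a
      · -- false: rmap (f.fA false) = rmap (g.fA false)
        apply Subtype.ext
        show rmap X a1 b1 (f.fA false) = rmap X a1 b1 (g.fA false)
        rw [rmap_eq_iff X a1 b1 h1 h2]
        right; right; right; left
        exact ⟨hfi, hgi⟩
      · apply Subtype.ext
        show rmap X a1 b1 (f.fA true) = rmap X a1 b1 (g.fA true)
        rw [rmap_eq_iff X a1 b1 h1 h2]
        right; left; exact ⟨rfl, rfl⟩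
  · -- universal property
    rintro K e ⟨e0, hcf, hcg⟩
    have heA : ∀ a : Bool, e.fA (f.fA a) = e.fA (g.fA a) := fun a =>
      (hcf.1 a).symm.trans (hcg.1 a)
    have hr : ∀ a : X.A, e.fA (rmap X a1 b1 a) = e.fA a := by
      intro a
      unfold rmap
      split_ifs with hb hbi
      · rw [hb]; exact heA true
      · rw [hbi]; have := heA false; rwa [hfi, hgi] at this
      · rfl
    refine ⟨⟨fun a => e.fA a.1, e.fH, e.fV, ?_, e.comm_p, fun a => e.comm_i a.1, e.pullback⟩,
      ⟨fun a => (hr a).symm, fun h => rfl, fun v => rfl⟩, ?_⟩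
    · intro h
      show e.fA (rmap X a1 b1 (X.s h)) = K.s (e.fH h)
      rw [hr]; exact e.comm_s h
    · rintro e' ⟨hA, hH, hV⟩
      refine Etale.ext' ?_ (funext fun h => (hH h).symm) (funext fun v => (hV v).symm)
      funext ⟨a, hb, hbi⟩
      have := (hA a).symm
      rwa [show (glueQ X a1 b1 hf hpb h1 h2).fA a = ⟨a, hb, hbi⟩ from
        Subtype.ext (rmap_id X a1 b1 hb hbi)] at this
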